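/- Every S-quasinormal subgroup of a finite group G is subnormal in G. -/

import Mathlib

open scoped Pointwise

/-- `H` is S-quasinormal in `G` if it permutes with every Sylow subgroup of `G`. -/
def SQuasinormal (G : Type*) [Group G] (H : Subgroup G) : Prop :=
  ∀ (p : ℕ), p.Prime → ∀ P : Sylow p G,
    (H : Set G) * ((P : Subgroup G) : Set G) = ((P : Subgroup G) : Set G) * (H : Set G)

/-- `H` is subnormal in `G`: there is a chain `H = s 0 ⊴ s 1 ⊴ ⋯ ⊴ s n = G`. -/
def IsSubnormalSubgroup (G : Type*) [Group G] (H : Subgroup G) : Prop :=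
  ∃ (n : ℕ) (s : ℕ → Subgroup G), s 0 = H ∧ s n = ⊤ ∧
    ∀ i < n, s i ≤ s (i + 1) ∧ ((s i).subgroupOf (s (i + 1))).Normal

namespace SQNAux

variable {G : Type*} [Group G]

/-- If the set-products of two subgroups commute, the product is the subgroup join. -/
lemma coe_sup_eq_mul {A B : Subgroup G}
    (h : (A : Set G) * (B : Set G) = (B : Set G) * (A : Set G)) :
    ((A ⊔ B : Subgroup G) : Set G) = (A : Set G) * (B : Set G) := by
  have hK : ∃ K : Subgroup G, (K : Set G) = (A : Set G) * (B : Set G) := by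
    refine ⟨{ carrier := (A : Set G) * (B : Set G)
              one_mem' := ⟨1, one_mem A, 1, one_mem B, by simp⟩
              mul_mem' := ?_
              inv_mem' := ?_ }, rfl⟩
    · rintro x y ⟨a, ha, b, hb, rfl⟩ ⟨c, hc, d, hd, rfl⟩
      have : b * c ∈ (B : Set G) * (A : Set G) := ⟨b, hb, c, hc, rfl⟩
      rw [← h] at this
      obtain ⟨a', ha', b', hb', hab⟩ := this
      refine ⟨a * a', mul_mem ha ha', b' * d, mul_mem hb' hd, ?_⟩
      show a * a' * (b' * d) = a * b * (c * d)
      have hab' : a' * b' = b * c := hab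
      rw [mul_assoc, ← mul_assoc a', hab']
      group
    · rintro x ⟨a, ha, b, hb, rfl⟩
      have : b⁻¹ * a⁻¹ ∈ (B : Set G) * (A : Set G) := ⟨b⁻¹, inv_mem hb, a⁻¹, inv_mem ha, rfl⟩
      rw [← h] at this
      simpa [mul_inv_rev] using this
  obtain ⟨K, hKeq⟩ := hK
  have h1 : A ⊔ B ≤ K := by
    refine sup_le (fun a ha => ?_) (fun b hb => ?_)
    · show a ∈ (K : Set G); rw [hKeq]; exact ⟨a, ha, 1, one_mem B, by simp⟩
    · show b ∈ (K : Set G); rw [hKeq]; exact ⟨1, one_mem A, b, hb, by simp⟩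
  have h2 : K ≤ A ⊔ B := by
    intro x hx
    have : x ∈ (K : Set G) := hx
    rw [hKeq] at this
    obtain ⟨a, ha, b, hb, rfl⟩ := this
    exact mul_mem (Subgroup.mem_sup_left ha) (Subgroup.mem_sup_right hb)
  rw [le_antisymm h1 h2, hKeq]

/-- If `Q * B = univ` as a set product, then the index of `B` divides the order of `Q`. -/
lemma index_dvd_of_mul_eq_univ {Q B : Subgroup G}
    (h : (Q : Set G) * (B : Set G) = Set.univ) : B.index ∣ Nat.card Q := by
  classical
  -- map `Q ⧸ (B.subgroupOf Q) → G ⧸ B`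
  have key : ∀ a b : Q, (QuotientGroup.leftRel (B.subgroupOf Q)) a b →
      (QuotientGroup.mk (a : G) : G ⧸ B) = QuotientGroup.mk (b : G) := by
    intro a b hab
    rw [QuotientGroup.leftRel_apply] at hab
    exact (QuotientGroup.eq).2 hab
  let f : Q ⧸ (B.subgroupOf Q) → G ⧸ B :=
    Quotient.lift (fun q : Q => (QuotientGroup.mk (q : G) : G ⧸ B)) key
  have hfsurj : Function.Surjective f := by
    intro x
    obtain ⟨g, rfl⟩ := QuotientGroup.mk_surjective x
    have hg : g ∈ (Q : Set G) * (B : Set G) := by rw [h]; trivial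
    obtain ⟨q, hq, b, hb, rfl⟩ := hg
    refine ⟨QuotientGroup.mk (⟨q, hq⟩ : Q), ?_⟩
    show (QuotientGroup.mk q : G ⧸ B) = QuotientGroup.mk (q * b)
    exact (QuotientGroup.eq).2 (by simpa using hb)
  have hfinj : Function.Injective f := by
    intro a b hab
    obtain ⟨a, rfl⟩ := Quotient.exists_rep a
    obtain ⟨b, rfl⟩ := Quotient.exists_rep b
    have : (QuotientGroup.mk (a : G) : G ⧸ B) = QuotientGroup.mk (b : G) := hab
    rw [QuotientGroup.eq] at this
    apply Quotient.sound
    show (QuotientGroup.leftRel (B.subgroupOf Q)) a b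
    rw [QuotientGroup.leftRel_apply]
    simpa [Subgroup.mem_subgroupOf] using this
  have : Nat.card (G ⧸ B) = Nat.card (Q ⧸ (B.subgroupOf Q)) :=
    (Nat.card_congr (Equiv.ofBijective f ⟨hfinj, hfsurj⟩)).symm
  have hdvd : (B.subgroupOf Q).index ∣ Nat.card Q := Subgroup.index_dvd_card _
  rw [Subgroup.index, this]
  exact hdvd

end SQNAux
/-- A subnormal chain from `A` up to `B` inside `G`. -/
def SubChain {G : Type*} [Group G] (A B : Subgroup G) : Prop :=
  ∃ (n : ℕ) (s : ℕ → Subgroup G), s 0 = A ∧ s n = B ∧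
    ∀ i < n, s i ≤ s (i + 1) ∧ ((s i).subgroupOf (s (i + 1))).Normal

namespace SubChain

variable {G : Type*} [Group G] {A B C : Subgroup G}

lemma refl (A : Subgroup G) : SubChain A A :=
  ⟨0, fun _ => A, rfl, rfl, fun i hi => absurd hi (Nat.not_lt_zero i)⟩

lemma step (hle : A ≤ B) (hn : (A.subgroupOf B).Normal) : SubChain A B := by
  refine ⟨1, fun i => if i = 0 then A else B, by simp, by simp, ?_⟩
  intro i hi
  have : i = 0 := by omega
  subst this
  simpa using ⟨hle, hn⟩

lemma trans (h1 : SubChain A B) (h2 : SubChain B C) : SubChain A C := by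
  obtain ⟨n, s, hs0, hsn, hs⟩ := h1
  obtain ⟨m, t, ht0, htm, ht⟩ := h2
  refine ⟨n + m, fun i => if i ≤ n then s i else t (i - n), by simp [hs0],
    ?_, ?_⟩
  · by_cases h : m = 0
    · subst h; simp [hsn, ← ht0, htm]
    · have : ¬ (n + m ≤ n) := by omega
      simp only [this, if_false]
      simpa using htm
  · intro i hi
    beta_reduce
    by_cases h1 : i + 1 ≤ n
    · have h0 : i ≤ n := by omega
      rw [show (if i ≤ n then s i else t (i-n)) = s i from if_pos h0, show (if i+1 ≤ n then s (i+1) else t (i+1-n)) = s (i+1) from if_pos h1]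
      exact hs i (by omega)
    · by_cases h0 : i ≤ n
      · have hin : i = n := by omega
        subst hin
        rw [show (if i ≤ i then s i else t (i-i)) = s i from if_pos h0,
          show (if i+1 ≤ i then s (i+1) else t (i+1-i)) = t (i+1-i) from if_neg h1,
          show i + 1 - i = 1 from by omega, hsn, ← ht0]
        exact ht 0 (by omega)
      · rw [show (if i ≤ n then s i else t (i-n)) = t (i-n) from if_neg h0,
          show (if i+1 ≤ n then s (i+1) else t (i+1-n)) = t (i+1-n) from if_neg h1,
          show i + 1 - n = (i - n) + 1 from by omega]
        exact ht (i - n) (by omega)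

/-- A chain witnessing subnormality inside a subgroup `J` transports to a chain in `G`. -/
lemma of_subgroup {J : Subgroup G} {A B : Subgroup J} (h : SubChain A B) :
    SubChain (A.map J.subtype) (B.map J.subtype) := by
  obtain ⟨n, s, hs0, hsn, hs⟩ := h
  refine ⟨n, fun i => (s i).map J.subtype, by simp only [hs0], by simp only [hsn], ?_⟩
  intro i hi
  obtain ⟨hle, hnorm⟩ := hs i hi
  refine ⟨Subgroup.map_mono hle, ?_⟩
  constructor
  rintro ⟨x, hxB⟩ hx g
  -- x ∈ G, hxB : x ∈ map subtype (s (i+1)), hx : x ∈ (map subtype (s i)).subgroupOf _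
  have hx' : x ∈ (s i).map J.subtype := hx
  obtain ⟨a, ha, hax⟩ := hx'
  obtain ⟨b, hb, hbg⟩ := g.2
  have key : (⟨b, hb⟩ : s (i+1)) * ⟨a, hle ha⟩ * (⟨b, hb⟩ : s (i+1))⁻¹ ∈
      (s i).subgroupOf (s (i+1)) := hnorm.conj_mem ⟨a, hle ha⟩ (by simpa [Subgroup.mem_subgroupOf]
        using ha) ⟨b, hb⟩
  have key' : (b * a * b⁻¹ : J) ∈ s i := by simpa [Subgroup.mem_subgroupOf] using key
  show (↑g * x * (↑g)⁻¹ : G) ∈ (s i).map J.subtype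
  refine ⟨b * a * b⁻¹, key', ?_⟩
  have hax' : (a : G) = x := hax
  have hbg' : (b : G) = (g : G) := hbg
  simp only [Subgroup.coe_subtype, Subgroup.coe_mul, Subgroup.coe_inv]
  rw [hax', hbg']

end SubChain
namespace SQuasinormal

variable {G : Type*} [Group G] {H : Subgroup G}

lemma conj (hH : SQuasinormal G H) (g : G) : SQuasinormal G (MulAut.conj g • H) := by
  intro p hp P
  set P' : Sylow p G := g⁻¹ • P with hP'
  have hPP : (g • P' : Sylow p G) = P := smul_inv_smul g P
  have hcoe : ((P : Subgroup G) : Set G) = MulAut.conj g • (((P' : Subgroup G)) : Set G) := by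
    rw [← hPP, Sylow.coe_subgroup_smul, Subgroup.coe_pointwise_smul]
  have himg : ∀ s : Set G, MulAut.conj g • s = ⇑(MulAut.conj g) '' s :=
    fun s => (Set.image_smul).symm
  rw [Subgroup.coe_pointwise_smul, hcoe, himg, himg, ← Set.image_mul (MulAut.conj g),
    ← Set.image_mul (MulAut.conj g), hH p hp P']

lemma sup {A B : Subgroup G} (hA : SQuasinormal G A) (hB : SQuasinormal G B) :
    SQuasinormal G (A ⊔ B) := by
  intro p hp P
  set Ps : Set G := ((P : Subgroup G) : Set G) with hPs
  set J : Subgroup G := A ⊔ B with hJ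
  have hT : ∃ T : Subgroup G,
      (T : Set G) = {x | Ps * {x} ⊆ (J : Set G) * Ps ∧ {x} * Ps ⊆ Ps * (J : Set G)} := by
    refine ⟨{ carrier := {x | Ps * {x} ⊆ (J : Set G) * Ps ∧ {x} * Ps ⊆ Ps * (J : Set G)}
              one_mem' := ?one
              mul_mem' := ?mul
              inv_mem' := ?inv }, rfl⟩
    case one =>
      simp only [Set.mem_setOf_eq]
      constructor
      · rintro z ⟨q, hq, w, hw, rfl⟩
        rcases hw with rfl
        exact ⟨1, J.one_mem, q * 1, by simpa using hq, by simp⟩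
      · rintro z ⟨w, hw, q, hq, rfl⟩
        rcases hw with rfl
        exact ⟨1 * q, by simpa using hq, 1, J.one_mem, by simp⟩
    case mul =>
      rintro a b ha hb
      simp only [Set.mem_setOf_eq] at ha hb ⊢
      obtain ⟨ha1, ha2⟩ := ha
      obtain ⟨hb1, hb2⟩ := hb
      constructor
      · rintro z ⟨q, hq, w, hw, rfl⟩
        rcases hw with rfl
        have h1 : q * a ∈ (J : Set G) * Ps := ha1 ⟨q, hq, a, rfl, rfl⟩
        obtain ⟨j, hj, q', hq', hqa⟩ := h1
        have hqa' : j * q' = q * a := hqa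
        have h2 : q' * b ∈ (J : Set G) * Ps := hb1 ⟨q', hq', b, rfl, rfl⟩
        obtain ⟨j', hj', q'', hq'', hqb⟩ := h2
        have hqb' : j' * q'' = q' * b := hqb
        refine ⟨j * j', mul_mem hj hj', q'', hq'', ?_⟩
        show j * j' * q'' = q * (a * b)
        calc j * j' * q'' = j * (j' * q'') := by group
        _ = j * (q' * b) := by rw [hqb']
        _ = (j * q') * b := by group
        _ = (q * a) * b := by rw [hqa']
        _ = q * (a * b) := by group
      · rintro z ⟨w, hw, q, hq, rfl⟩
        rcases hw with rfl
        have h1 : b * q ∈ Ps * (J : Set G) := hb2 ⟨b, rfl, q, hq, rfl⟩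
        obtain ⟨q', hq', j, hj, hbq⟩ := h1
        have hbq' : q' * j = b * q := hbq
        have h2 : a * q' ∈ Ps * (J : Set G) := ha2 ⟨a, rfl, q', hq', rfl⟩
        obtain ⟨q'', hq'', j', hj', haq⟩ := h2
        have haq' : q'' * j' = a * q' := haq
        refine ⟨q'', hq'', j' * j, mul_mem hj' hj, ?_⟩
        show q'' * (j' * j) = a * b * q
        calc q'' * (j' * j) = (q'' * j') * j := by group
        _ = (a * q') * j := by rw [haq']
        _ = a * (q' * j) := by group
        _ = a * (b * q) := by rw [hbq']
        _ = a * b * q := by group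
    case inv =>
      rintro a ha
      simp only [Set.mem_setOf_eq] at ha ⊢
      obtain ⟨ha1, ha2⟩ := ha
      constructor
      · rintro z ⟨q, hq, w, hw, rfl⟩
        rcases hw with rfl
        have h1 : a * q⁻¹ ∈ Ps * (J : Set G) :=
          ha2 ⟨a, rfl, q⁻¹, inv_mem hq, rfl⟩
        obtain ⟨q', hq', j, hj, haq⟩ := h1
        have haq' : q' * j = a * q⁻¹ := haq
        refine ⟨j⁻¹, inv_mem hj, q'⁻¹, inv_mem hq', ?_⟩
        show j⁻¹ * q'⁻¹ = q * a⁻¹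
        have h2 : (q' * j)⁻¹ = (a * q⁻¹)⁻¹ := by rw [haq']
        simpa [mul_inv_rev] using h2
      · rintro z ⟨w, hw, q, hq, rfl⟩
        rcases hw with rfl
        have h1 : q⁻¹ * a ∈ (J : Set G) * Ps :=
          ha1 ⟨q⁻¹, inv_mem hq, a, rfl, rfl⟩
        obtain ⟨j, hj, q', hq', haq⟩ := h1
        have haq' : j * q' = q⁻¹ * a := haq
        refine ⟨q'⁻¹, inv_mem hq', j⁻¹, inv_mem hj, ?_⟩
        show q'⁻¹ * j⁻¹ = a⁻¹ * q
        have h2 : (j * q')⁻¹ = (q⁻¹ * a)⁻¹ := by rw [haq']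
        simpa [mul_inv_rev] using h2
  obtain ⟨T, hTcoe⟩ := hT
  have hmemT : ∀ x, x ∈ T → (Ps * {x} ⊆ (J : Set G) * Ps ∧ {x} * Ps ⊆ Ps * (J : Set G)) := by
    intro x hx
    have : x ∈ (T : Set G) := hx
    rw [hTcoe] at this
    exact this
  have hAT : A ≤ T := by
    intro a ha
    show a ∈ (T : Set G)
    rw [hTcoe]
    refine ⟨?_, ?_⟩
    · rintro z ⟨q, hq, w, hw, hzeq⟩
      have hw' : w = a := hw
      rw [hw'] at hzeq
      have : q * a ∈ Ps * (A : Set G) := ⟨q, hq, a, ha, rfl⟩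
      rw [← hA p hp P] at this
      obtain ⟨a', ha', q', hq', h⟩ := this
      have h' : a' * q' = q * a := h
      exact ⟨a', Subgroup.mem_sup_left ha', q', hq', by rw [← hzeq]; exact h'⟩
    · rintro z ⟨w, hw, q, hq, hzeq⟩
      have hw' : w = a := hw
      rw [hw'] at hzeq
      have : a * q ∈ (A : Set G) * Ps := ⟨a, ha, q, hq, rfl⟩
      rw [hA p hp P] at this
      obtain ⟨q', hq', a', ha', h⟩ := this
      have h' : q' * a' = a * q := h
      exact ⟨q', hq', a', Subgroup.mem_sup_left ha', by rw [← hzeq]; exact h'⟩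
  have hBT : B ≤ T := by
    intro b hb
    show b ∈ (T : Set G)
    rw [hTcoe]
    refine ⟨?_, ?_⟩
    · rintro z ⟨q, hq, w, hw, hzeq⟩
      have hw' : w = b := hw
      rw [hw'] at hzeq
      have : q * b ∈ Ps * (B : Set G) := ⟨q, hq, b, hb, rfl⟩
      rw [← hB p hp P] at this
      obtain ⟨b', hb', q', hq', h⟩ := this
      have h' : b' * q' = q * b := h
      exact ⟨b', Subgroup.mem_sup_right hb', q', hq', by rw [← hzeq]; exact h'⟩
    · rintro z ⟨w, hw, q, hq, hzeq⟩
      have hw' : w = b := hw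
      rw [hw'] at hzeq
      have : b * q ∈ (B : Set G) * Ps := ⟨b, hb, q, hq, rfl⟩
      rw [hB p hp P] at this
      obtain ⟨q', hq', b', hb', h⟩ := this
      have h' : q' * b' = b * q := h
      exact ⟨q', hq', b', Subgroup.mem_sup_right hb', by rw [← hzeq]; exact h'⟩
  have hJT : J ≤ T := sup_le hAT hBT
  apply Set.Subset.antisymm
  · rintro z ⟨j, hj, q, hq, rfl⟩
    exact (hmemT j (hJT hj)).2 ⟨j, rfl, q, hq, rfl⟩
  · rintro z ⟨q, hq, j, hj, rfl⟩
    exact (hmemT j (hJT hj)).1 ⟨q, hq, j, rfl, rfl⟩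

lemma subgroupOf (hH : SQuasinormal G H) {J : Subgroup G} (hHJ : H ≤ J) :
    SQuasinormal J (H.subgroupOf J) := by
  intro p hp PJ
  obtain ⟨Q, hQ⟩ := PJ.exists_comap_subtype_eq
  have hinj : Function.Injective (J.subtype) := J.subtype_injective
  apply Set.image_injective.mpr hinj
  rw [Set.image_mul J.subtype, Set.image_mul J.subtype]
  have h1 : ⇑J.subtype '' ((H.subgroupOf J : Subgroup J) : Set J) = (H : Set G) := by
    rw [← Subgroup.coe_map, Subgroup.subgroupOf_map_subtype, inf_eq_left.mpr hHJ]
  have h2 : ⇑J.subtype '' (((PJ : Subgroup J)) : Set J) =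
      ((Q : Subgroup G) : Set G) ∩ (J : Set G) := by
    rw [← Subgroup.coe_map, ← hQ, Subgroup.comap_subtype, Subgroup.subgroupOf_map_subtype,
      Subgroup.coe_inf]
  rw [h1, h2]
  have hcomm := hH p hp Q
  apply Set.Subset.antisymm
  · rintro z ⟨h, hh, u, hu, rfl⟩
    have hz : h * u ∈ (H : Set G) * ((Q : Subgroup G) : Set G) := ⟨h, hh, u, hu.1, rfl⟩
    rw [hcomm] at hz
    obtain ⟨q, hq, h', hh', hz'⟩ := hz
    have hz'' : q * h' = h * u := hz'
    have hzJ : h * u ∈ J := mul_mem (hHJ hh) hu.2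
    have hqJ : q ∈ (J : Set G) := by
      have he : q = (h * u) * h'⁻¹ := by rw [← hz'']; group
      rw [he]
      exact mul_mem hzJ (inv_mem (hHJ hh'))
    exact ⟨q, ⟨hq, hqJ⟩, h', hh', hz'⟩
  · rintro z ⟨u, hu, h, hh, rfl⟩
    have hz : u * h ∈ ((Q : Subgroup G) : Set G) * (H : Set G) := ⟨u, hu.1, h, hh, rfl⟩
    rw [← hcomm] at hz
    obtain ⟨h', hh', q, hq, hz'⟩ := hz
    have hz'' : h' * q = u * h := hz'
    have hzJ : u * h ∈ J := mul_mem hu.2 (hHJ hh)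
    have hqJ : q ∈ (J : Set G) := by
      have he : q = h'⁻¹ * (u * h) := by rw [← hz'']; group
      rw [he]
      exact mul_mem (inv_mem (hHJ hh')) hzJ
    exact ⟨h', hh', q, ⟨hq, hqJ⟩, hz'⟩

end SQuasinormal
namespace SQNAux

variable {G : Type*} [Group G]

lemma orderOf_pos' [Finite G] (g : G) : 0 < orderOf g := by
  rw [← Nat.card_zpowers]
  exact Nat.card_pos

lemma mem_of_dvd_prime_pow_order [Finite G] {X : Subgroup G}
    (hX : ∀ (q : ℕ), q.Prime → ∀ Q : Sylow q G, (Q : Subgroup G) ≤ X)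
    {g : G} {q : ℕ} (hq : q.Prime) {k : ℕ} (hord : orderOf g ∣ q ^ k) : g ∈ X := by
  haveI := Fact.mk hq
  obtain ⟨j, hjk, hcard⟩ := (Nat.dvd_prime_pow hq).1 hord
  have hpg : IsPGroup q (Subgroup.zpowers g) :=
    IsPGroup.of_card (by rw [Nat.card_zpowers]; exact hcard)
  obtain ⟨Q, hle⟩ := hpg.exists_le_sylow
  exact hX q hq Q (hle (Subgroup.mem_zpowers g))

lemma eq_top_of_sylows_le [Finite G] {X : Subgroup G}
    (hX : ∀ (q : ℕ), q.Prime → ∀ Q : Sylow q G, (Q : Subgroup G) ≤ X) : X = ⊤ := by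
  have main : ∀ (n : ℕ) (g : G), orderOf g = n → g ∈ X := by
    intro n
    induction n using Nat.strong_induction_on with
    | _ n ih =>
      intro g hg
      rcases eq_or_ne n 1 with h1 | h1
      · have : g = 1 := orderOf_eq_one_iff.mp (by rw [hg, h1])
        exact this ▸ X.one_mem
      have hn0 : n ≠ 0 := by
        have := orderOf_pos' g
        omega
      set q := n.minFac with hqdef
      have hqp : q.Prime := Nat.minFac_prime h1
      set a := n.factorization q with hadef
      set m := n / q ^ a with hmdef
      have hsplit : q ^ a * m = n := Nat.ordProj_mul_ordCompl_eq_self n q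
      have ha1 : 0 < a := hqp.factorization_pos_of_dvd hn0 (Nat.minFac_dvd n)
      have hqa2 : 2 ≤ q ^ a := by
        calc 2 ≤ q := hqp.two_le
        _ = q ^ 1 := (pow_one q).symm
        _ ≤ q ^ a := Nat.pow_le_pow_right (le_trans one_le_two hqp.two_le) ha1
      by_cases hm1 : m = 1
      · refine mem_of_dvd_prime_pow_order hX hqp (k := a) ?_
        rw [hg, ← hsplit, hm1, mul_one]
      · have hm0 : m ≠ 0 := by
          intro h
          rw [h, mul_zero] at hsplit
          exact hn0 hsplit.symm
        have hcop : Nat.Coprime (q ^ a) m :=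
          Nat.Coprime.pow_left _ (Nat.coprime_ordCompl hqp hn0)
        have hgn : g ^ n = 1 := by rw [← hg]; exact pow_orderOf_eq_one g
        have hx : orderOf (g ^ m) ∣ q ^ a := by
          rw [orderOf_dvd_iff_pow_eq_one, ← pow_mul, mul_comm m, hsplit, hgn]
        have hxX : g ^ m ∈ X := mem_of_dvd_prime_pow_order hX hqp hx
        have hy : orderOf (g ^ (q ^ a)) ∣ m := by
          rw [orderOf_dvd_iff_pow_eq_one, ← pow_mul, hsplit, hgn]
        have hmn : m < n := by
          rw [← hsplit]
          exact (lt_mul_iff_one_lt_left (Nat.pos_of_ne_zero hm0)).mpr (by omega)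
        have hyX : g ^ (q ^ a) ∈ X := by
          refine ih (orderOf (g ^ (q ^ a))) ?_ _ rfl
          calc orderOf (g ^ (q ^ a)) ≤ m := Nat.le_of_dvd (Nat.pos_of_ne_zero hm0) hy
          _ < n := hmn
        have hcop' : IsCoprime ((q ^ a : ℕ) : ℤ) ((m : ℕ) : ℤ) :=
          Nat.isCoprime_iff_coprime.mpr hcop
        obtain ⟨u, v, huv⟩ := hcop'
        have hgeq : g = (g ^ (q ^ a)) ^ u * (g ^ m) ^ v := by
          have e1 : (g ^ (q ^ a)) ^ u = g ^ (((q ^ a : ℕ) : ℤ) * u) := by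
            rw [zpow_mul, zpow_natCast]
          have e2 : (g ^ m) ^ v = g ^ (((m : ℕ) : ℤ) * v) := by
            rw [zpow_mul, zpow_natCast]
          rw [e1, e2, ← zpow_add, show ((q ^ a : ℕ) : ℤ) * u + ((m : ℕ) : ℤ) * v = 1 from by
            rw [mul_comm _ u, mul_comm _ v]; exact huv, zpow_one]
        rw [hgeq]
        exact mul_mem (X.zpow_mem hyX u) (X.zpow_mem hxX v)
  rw [eq_top_iff]
  intro g _
  exact main (orderOf g) g rfl

lemma card_lt_of_lt [Finite G] {K1 K2 : Subgroup G} (h : K1 < K2) :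
    Nat.card K1 < Nat.card K2 := by
  have hle := Subgroup.card_le_of_le h.le
  refine lt_of_le_of_ne hle (fun heq => ?_)
  have he := Subgroup.subgroupOfEquivOfLe h.le
  have hcard : Nat.card (K1.subgroupOf K2) = Nat.card K2 := by
    rw [Nat.card_congr he.toEquiv, heq]
  have htop : K1.subgroupOf K2 = ⊤ := Subgroup.eq_top_of_card_eq _ hcard
  have hK21 : K2 ≤ K1 := Subgroup.subgroupOf_eq_top.mp htop
  exact absurd (le_antisymm h.le hK21) (ne_of_lt h)

lemma lt_normalizer_of_pquotient [Finite G] {p : ℕ} (hp : p.Prime) {L X : Subgroup G}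
    (hLn : L.Normal) (hpq : IsPGroup p (G ⧸ L)) (hLX : L ≤ X) (hX : X ≠ ⊤) :
    X < (Subgroup.normalizer (X : Set G)) := by
  haveI := Fact.mk hp
  haveI := hLn
  haveI : Group.IsNilpotent (G ⧸ L) := hpq.isNilpotent
  have hnc : NormalizerCondition (G ⧸ L) := normalizerCondition_of_isNilpotent
  set mk := QuotientGroup.mk' L with hmk
  have hker : mk.ker = L := QuotientGroup.ker_mk' L
  set X' := X.map mk with hX'def
  have hcomap : X'.comap mk = X := by
    rw [hX'def, Subgroup.comap_map_eq, hker, sup_eq_left.mpr hLX]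
  have hX' : X' ≠ ⊤ := by
    intro h
    apply hX
    rw [← hcomap, h, Subgroup.comap_top]
  have hlt := hnc X' (lt_top_iff_ne_top.mpr hX')
  obtain ⟨xq, hxqmem, hxqnot⟩ := SetLike.exists_of_lt hlt
  obtain ⟨x, rfl⟩ := QuotientGroup.mk'_surjective L xq
  have hmemiff : ∀ h : G, h ∈ X ↔ mk h ∈ X' := by
    intro h
    constructor
    · intro hh
      exact Subgroup.mem_map_of_mem mk hh
    · intro hh
      rw [← hcomap]
      exact hh
  refine lt_of_le_of_ne Subgroup.le_normalizer (fun heq => ?_)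
  have hxmem : x ∈ (Subgroup.normalizer (X : Set G)) := by
    rw [Subgroup.mem_normalizer_iff]
    intro h
    have hmkeq : mk (x * h * x⁻¹) = mk x * mk h * (mk x)⁻¹ := by
      rw [map_mul, map_mul, map_inv]
    rw [hmemiff h, hmemiff (x * h * x⁻¹), hmkeq]
    exact Subgroup.mem_normalizer_iff.mp hxqmem (mk h)
  rw [← heq] at hxmem
  exact hxqnot (Subgroup.mem_map_of_mem mk hxmem)

lemma subchain_top_of_pquotient [Finite G] {p : ℕ} (hp : p.Prime) {L H : Subgroup G}
    (hLn : L.Normal) (hpq : IsPGroup p (G ⧸ L)) (hLH : L ≤ H) : SubChain H ⊤ := by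
  set f : ℕ → Subgroup G := fun i => (fun K : Subgroup G => Subgroup.normalizer (K : Set G))^[i] H with hf
  have hf0 : f 0 = H := rfl
  have hfs : ∀ i, f (i + 1) = Subgroup.normalizer (f i : Set G) := fun i =>
    Function.iterate_succ_apply' _ _ _
  have hmono : ∀ i, f i ≤ f (i + 1) := by
    intro i
    rw [hfs]
    exact Subgroup.le_normalizer
  have hLf : ∀ i, L ≤ f i := by
    intro i
    induction i with
    | zero => exact hLH
    | succ j hj => exact le_trans hj (hmono j)
  have hnorm : ∀ i, ((f i).subgroupOf (f (i + 1))).Normal := by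
    intro i
    rw [hfs]
    exact Subgroup.normal_in_normalizer
  have hreach : ∀ i, f i = ⊤ ∨ i + 1 ≤ Nat.card (f i) := by
    intro i
    induction i with
    | zero =>
      right
      exact Nat.card_pos
    | succ j hj =>
      by_cases hfj : f j = ⊤
      · left
        rw [hfs, hfj]
        exact le_antisymm le_top Subgroup.le_normalizer
      · by_cases hfj1 : f (j + 1) = ⊤
        · left; exact hfj1
        · right
          have hgrow : f j < f (j + 1) := by
            rw [hfs]
            exact lt_normalizer_of_pquotient hp hLn hpq (hLf j) hfj
          have := card_lt_of_lt hgrow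
          rcases hj with hj | hj
          · exact absurd hj hfj
          · omega
  have hfinal : f (Nat.card G) = ⊤ := by
    rcases hreach (Nat.card G) with h | h
    · exact h
    · have := Subgroup.card_le_card_group (H := f (Nat.card G)) (G := G)
      omega
  exact ⟨Nat.card G, f, hf0, hfinal, fun i _ => ⟨hmono i, hnorm i⟩⟩

end SQNAux
namespace SQNAux

variable {G : Type*} [Group G]

lemma sylow_q_le [Finite G] {H : Subgroup G} {p q : ℕ} (hp : p.Prime) (hq : q.Prime)
    (hqp : q ≠ p) (Q : Sylow q G)
    (hcomm : (H : Set G) * ((Q : Subgroup G) : Set G) = ((Q : Subgroup G) : Set G) * (H : Set G))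
    {s : ℕ} (hidx : H.index = p ^ s) : (Q : Subgroup G) ≤ H := by
  haveI := Fact.mk hq
  set K := H ⊔ (Q : Subgroup G) with hK
  have hcoeK : (K : Set G) = (H : Set G) * ((Q : Subgroup G) : Set G) := coe_sup_eq_mul hcomm
  have hHK : H ≤ K := le_sup_left
  have hQK : (Q : Subgroup G) ≤ K := le_sup_right
  have huniv : (((Q : Subgroup G).subgroupOf K : Subgroup K) : Set K) *
      ((H.subgroupOf K : Subgroup K) : Set K) = Set.univ := by
    apply Set.eq_univ_of_forall
    intro k
    have hk : (k : G) ∈ (K : Set G) := k.2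
    rw [hcoeK, hcomm] at hk
    obtain ⟨u, hu, h, hh, heq⟩ := hk
    have heq' : u * h = (k : G) := heq
    have huK : u ∈ K := hQK hu
    have hhK : h ∈ K := by
      have : h = u⁻¹ * (k : G) := by rw [← heq']; group
      rw [this]
      exact mul_mem (inv_mem huK) k.2
    refine ⟨⟨u, huK⟩, ?_, ⟨h, hhK⟩, ?_, ?_⟩
    · exact Subgroup.mem_subgroupOf.mpr hu
    · exact Subgroup.mem_subgroupOf.mpr hh
    · exact Subtype.ext heq'
  have hdvd1 : (H.subgroupOf K).index ∣ Nat.card ((Q : Subgroup G).subgroupOf K) :=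
    index_dvd_of_mul_eq_univ huniv
  have hcardQ : Nat.card ((Q : Subgroup G).subgroupOf K) = Nat.card (Q : Subgroup G) :=
    Nat.card_congr (Subgroup.subgroupOfEquivOfLe hQK).toEquiv
  obtain ⟨t, ht⟩ := IsPGroup.iff_card.mp Q.isPGroup'
  have hdvd2 : (H.subgroupOf K).index ∣ p ^ s := by
    have hrel := Subgroup.relIndex_mul_index hHK
    rw [hidx] at hrel
    exact ⟨K.index, by rw [← hrel]; rfl⟩
  have hdvdq : (H.subgroupOf K).index ∣ q ^ t := by
    rw [← ht, ← hcardQ]; exact hdvd1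
  have hcop : Nat.Coprime (q ^ t) (p ^ s) :=
    Nat.Coprime.pow t s ((Nat.coprime_primes hq hp).mpr hqp)
  have h1 : (H.subgroupOf K).index = 1 := by
    have := Nat.dvd_gcd hdvdq hdvd2
    rw [Nat.Coprime] at hcop
    rw [hcop] at this
    exact Nat.dvd_one.mp this
  have : H.subgroupOf K = ⊤ := Subgroup.index_eq_one.mp h1
  have hKH : K ≤ H := Subgroup.subgroupOf_eq_top.mp this
  exact le_trans hQK hKH

lemma subchain_of_sup_sylow_eq_top [Finite G] {H : Subgroup G} (hH : SQuasinormal G H)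
    {p : ℕ} (hp : p.Prime) (P : Sylow p G) (htop : H ⊔ (P : Subgroup G) = ⊤) :
    SubChain H (⊤ : Subgroup G) := by
  haveI := Fact.mk hp
  have hcoe : ((H ⊔ (P : Subgroup G) : Subgroup G) : Set G)
      = (H : Set G) * ((P : Subgroup G) : Set G) := coe_sup_eq_mul (hH p hp P)
  have huniv : ((P : Subgroup G) : Set G) * (H : Set G) = Set.univ := by
    rw [← hH p hp P, ← hcoe, htop]
    rfl
  have hidxdvd : H.index ∣ Nat.card (P : Subgroup G) := index_dvd_of_mul_eq_univ huniv
  obtain ⟨sP, hsP⟩ := IsPGroup.iff_card.mp P.isPGroup'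
  rw [hsP] at hidxdvd
  obtain ⟨s, _, hsidx⟩ := (Nat.dvd_prime_pow hp).1 hidxdvd
  have hsyl : ∀ q, q.Prime → q ≠ p → ∀ Q : Sylow q G, (Q : Subgroup G) ≤ H :=
    fun q hq hqp Q => sylow_q_le hp hq hqp Q (hH q hq Q) hsidx
  set S : Set G := {x | ∃ (q : ℕ), q.Prime ∧ q ≠ p ∧ ∃ Q : Sylow q G, x ∈ (Q : Subgroup G)}
    with hS
  set L := Subgroup.closure S with hL
  have hLH : L ≤ H := by
    rw [hL, Subgroup.closure_le]
    rintro x ⟨q, hq, hqp, Q, hxQ⟩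
    exact hsyl q hq hqp Q hxQ
  have hstab : ∀ g : G, MulAut.conj g • S ⊆ S := by
    intro g x hx
    obtain ⟨y, hy, hxy⟩ := hx
    obtain ⟨q, hq, hqp, Q, hyQ⟩ := hy
    refine ⟨q, hq, hqp, g • Q, ?_⟩
    have : MulAut.conj g • y ∈ (MulAut.conj g • (Q : Subgroup G) : Subgroup G) :=
      Subgroup.smul_mem_pointwise_smul y (MulAut.conj g) (Q : Subgroup G) hyQ
    rw [← Sylow.coe_subgroup_smul] at this
    rw [← hxy]
    exact this
  have hSfix : ∀ g : G, MulAut.conj g • S = S := by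
    intro g
    refine Set.Subset.antisymm (hstab g) ?_
    intro x hx
    refine ⟨MulAut.conj g⁻¹ • x, ?_, ?_⟩
    · exact hstab g⁻¹ ⟨x, hx, rfl⟩
    · rw [map_inv]
      exact smul_inv_smul _ x
  have hLn : L.Normal := by
    apply Subgroup.Normal.of_conjugate_fixed
    intro g
    rw [hL, Subgroup.smul_closure, hSfix g]
  have hind : ∃ k, L.index = p ^ k := by
    have hprime : ∀ r, r.Prime → r ∣ L.index → r = p := by
      intro r hr hrdvd
      by_contra hrp
      haveI := Fact.mk hr
      obtain ⟨Q⟩ : Nonempty (Sylow r G) := inferInstance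
      have hQL : (Q : Subgroup G) ≤ L := by
        intro x hx
        exact Subgroup.subset_closure ⟨r, hr, hrp, Q, hx⟩
      have hcardQ : Nat.card (Q : Subgroup G) = r ^ (Nat.card G).factorization r :=
        Sylow.card_eq_multiplicity Q
      have h1 : r ^ ((Nat.card G).factorization r) ∣ Nat.card L := by
        rw [← hcardQ]
        exact Subgroup.card_dvd_of_le hQL
      have hmul : Nat.card L * L.index = Nat.card G := Subgroup.card_mul_index L
      have h2 : r ^ ((Nat.card G).factorization r) * r ∣ Nat.card L * L.index :=
        mul_dvd_mul h1 hrdvd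
      rw [hmul, ← pow_succ] at h2
      have h3 := (Nat.Prime.pow_dvd_iff_le_factorization hr
        (Nat.card_pos (α := G)).ne').1 h2
      omega
    have hne : L.index ≠ 0 := Subgroup.index_ne_zero_of_finite
    refine ⟨(L.index).factorization p, ?_⟩
    set n := L.index with hn
    set c := n / p ^ n.factorization p with hcdef
    have hc : p ^ n.factorization p * c = n := Nat.ordProj_mul_ordCompl_eq_self n p
    clear_value c
    rcases eq_or_ne c 1 with h | h
    · calc n = p ^ n.factorization p * c := hc.symm
      _ = p ^ n.factorization p := by rw [h, mul_one]
    · exfalso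
      have hrr : c.minFac.Prime := Nat.minFac_prime h
      have hcdvd : c ∣ n := Dvd.intro_left _ hc
      have hrrdvd : c.minFac ∣ n := (Nat.minFac_dvd c).trans hcdvd
      have heqp := hprime c.minFac hrr hrrdvd
      have hnd := Nat.not_dvd_ordCompl hp hne
      have hndc : ¬ p ∣ c := by rw [hcdef]; exact hnd
      refine hndc ?_
      rw [← heqp]
      exact Nat.minFac_dvd c
  obtain ⟨k, hk⟩ := hind
  have hpq : IsPGroup p (G ⧸ L) := IsPGroup.of_card (n := k) (by rw [← hk]; rfl)
  exact subchain_top_of_pquotient hp hLn hpq hLH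

end SQNAux
namespace SQNAux

universe u

theorem main_aux : ∀ (N : ℕ) (G : Type u) [Group G] [Finite G], Nat.card G ≤ N →
    ∀ (M : ℕ) (H : Subgroup G), H.index ≤ M → SQuasinormal G H →
      SubChain H (⊤ : Subgroup G) := by
  intro N
  induction N using Nat.strong_induction_on with
  | _ N ihN =>
    intro G _inst1 _inst2 hcardG M
    induction M using Nat.strong_induction_on with
    | _ M ihM =>
      intro H hidxH hsq
      by_cases hcase1 : ∃ (p : ℕ), p.Prime ∧ ∃ P : Sylow p G, H ⊔ (P : Subgroup G) = ⊤
      · obtain ⟨p, hp, P, htop⟩ := hcase1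
        exact subchain_of_sup_sylow_eq_top hsq hp P htop
      · push_neg at hcase1
        by_cases hcase2 : ∀ (p : ℕ), p.Prime → ∀ (P : Sylow p G) (g : G),
            g ∈ (P : Subgroup G) → MulAut.conj g • H = H
        · have hnt : Subgroup.normalizer (H : Set G) = ⊤ := by
            apply eq_top_of_sylows_le
            intro q hq Q
            intro x hx
            have hfix := hcase2 q hq Q x hx
            rw [Subgroup.mem_normalizer_iff]
            intro y
            constructor
            · intro hy
              have hmem : MulAut.conj x • y ∈ MulAut.conj x • H :=
                Subgroup.smul_mem_pointwise_smul y _ H hy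
              rw [hfix] at hmem
              simpa [MulAut.smul_def, MulAut.conj_apply] using hmem
            · intro hy
              have hy' : MulAut.conj x • y ∈ H := by
                simpa [MulAut.smul_def, MulAut.conj_apply] using hy
              rw [← hfix] at hy'
              rwa [Subgroup.smul_mem_pointwise_smul_iff] at hy'
          have hHn : H.Normal := Subgroup.normalizer_eq_top_iff.mp hnt
          refine SubChain.step le_top ?_
          constructor
          intro n hn g
          have hn' : (n : G) ∈ H := Subgroup.mem_subgroupOf.mp hn
          have hc : (g : G) * (n : G) * (g : G)⁻¹ ∈ H := hHn.conj_mem _ hn' _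
          simpa [Subgroup.mem_subgroupOf] using hc
        · push_neg at hcase2
          obtain ⟨p, hp, P, g, hgP, hne⟩ := hcase2
          set Hg := MulAut.conj g • H with hHg
          set J := H ⊔ Hg with hJ
          set K := H ⊔ (P : Subgroup G) with hK
          have hKne : K ≠ ⊤ := hcase1 p hp P
          have hHK : H ≤ K := le_sup_left
          have hPK : (P : Subgroup G) ≤ K := le_sup_right
          have hHgK : Hg ≤ K := by
            intro x hx
            rw [hHg, Subgroup.mem_smul_pointwise_iff_exists] at hx
            obtain ⟨y, hy, hxy⟩ := hx
            have hxe : x = g * y * g⁻¹ := by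
              rw [← hxy]; simp [MulAut.smul_def, MulAut.conj_apply]
            rw [hxe]
            exact mul_mem (mul_mem (hPK hgP) (hHK hy)) (inv_mem (hPK hgP))
          have hJK : J ≤ K := sup_le hHK hHgK
          have hHJ : H ≤ J := le_sup_left
          have hcards : Nat.card Hg = Nat.card H :=
            (Nat.card_congr (Subgroup.equivSMul (MulAut.conj g) H).toEquiv).symm
          have hHneJ : H ≠ J := by
            intro h
            have hHgle : Hg ≤ H := by rw [h]; exact le_sup_right
            rcases eq_or_lt_of_le hHgle with heq | hlt
            · exact hne heq
            · have := card_lt_of_lt hlt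
              omega
          have hJsq : SQuasinormal G J := SQuasinormal.sup hsq (SQuasinormal.conj hsq g)
          have hcardKlt : Nat.card K < Nat.card G := by
            have h1 : Nat.card K ≤ Nat.card G := Subgroup.card_le_card_group K
            rcases lt_or_eq_of_le h1 with h | h
            · exact h
            · exact absurd (Subgroup.eq_top_of_card_eq K h) hKne
          have hcardJ : Nat.card J < Nat.card G :=
            lt_of_le_of_lt (Subgroup.card_le_of_le hJK) hcardKlt
          have hchainHJ : SubChain H J := by
            have hsqJ : SQuasinormal J (H.subgroupOf J) := SQuasinormal.subgroupOf hsq hHJ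
            have hsub : SubChain (H.subgroupOf J) (⊤ : Subgroup J) :=
              ihN (Nat.card J) (by omega) J (le_refl _)
                ((H.subgroupOf J).index) (H.subgroupOf J) (le_refl _) hsqJ
            have hmapped := SubChain.of_subgroup hsub
            have e1 : (H.subgroupOf J).map J.subtype = H := by
              rw [Subgroup.subgroupOf_map_subtype]
              exact inf_eq_left.mpr hHJ
            have e2 : (⊤ : Subgroup J).map J.subtype = J := by
              rw [← MonoidHom.range_eq_map, Subgroup.range_subtype]
            rw [e1, e2] at hmapped
            exact hmapped
          have hidxJlt : J.index < H.index := by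
            have hrel := Subgroup.relIndex_mul_index hHJ
            have hr1 : H.relIndex J ≠ 1 := by
              intro h
              have htop : H.subgroupOf J = ⊤ := Subgroup.index_eq_one.mp h
              exact hHneJ (le_antisymm hHJ (Subgroup.subgroupOf_eq_top.mp htop))
            have hH0 : H.index ≠ 0 := Subgroup.index_ne_zero_of_finite
            have hJ0 : J.index ≠ 0 := Subgroup.index_ne_zero_of_finite
            have hr0 : H.relIndex J ≠ 0 := by
              intro h
              rw [h, zero_mul] at hrel
              exact hH0 hrel.symm
            have h2 : 2 * J.index ≤ H.relIndex J * J.index :=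
              Nat.mul_le_mul_right _ (by omega)
            have h3 : 2 * J.index ≤ H.index := by rw [← hrel]; exact h2
            omega
          have hchainJT : SubChain J (⊤ : Subgroup G) :=
            ihM J.index (by omega) J (le_refl _) hJsq
          exact SubChain.trans hchainHJ hchainJT

end SQNAux

/-- Every S-quasinormal subgroup of a finite group is subnormal. -/
theorem sQuasinormal_subnormal {G : Type*} [Group G] [Finite G] (H : Subgroup G)
    (hH : SQuasinormal G H) : IsSubnormalSubgroup G H := by
  obtain ⟨n, s, h0, hn, hstep⟩ :=
    SQNAux.main_aux (Nat.card G) G (le_refl _) H.index H (le_refl _) hH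
  exact ⟨n, s, h0, hn, hstep⟩
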